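/- For every permutation π ∈ S_n: L(π) ≤ S(π) ≤ 4·M_φ(π). -/

import Mathlib

variable {n : ℕ}

/-- The minimum `φ`-cost over all transposition decompositions of `π`. -/
noncomputable def Mcost (φ : Fin n → Fin n → ℝ) (π : Equiv.Perm (Fin n)) : ℝ :=
  sInf {c : ℝ | ∃ l : List (Fin n × Fin n), (∀ p ∈ l, p.1 ≠ p.2) ∧
    (l.map fun p => Equiv.swap p.1 p.2).prod = π ∧
    (l.map fun p => φ p.1 p.2).sum = c}

/-- The optimized cost `φ*(a,b) = M_φ(swap a b)` for `a ≠ b`, and `φ*(a,a) = 0`. -/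
noncomputable def optCost (φ : Fin n → Fin n → ℝ) (a b : Fin n) : ℝ :=
  if a = b then 0 else Mcost φ (Equiv.swap a b)

/-- The minimum `ψ`-cost over all transposition decompositions of `π` consisting of
exactly `m` transpositions. -/
noncomputable def Lcost (ψ : Fin n → Fin n → ℝ) (m : ℕ) (π : Equiv.Perm (Fin n)) : ℝ :=
  sInf {c : ℝ | ∃ l : List (Fin n × Fin n), (∀ p ∈ l, p.1 ≠ p.2) ∧ l.length = m ∧
    (l.map fun p => Equiv.swap p.1 p.2).prod = π ∧
    (l.map fun p => ψ p.1 p.2).sum = c}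

/-- `c(π)`: the number of cycles of `π` acting on `Fin n`, fixed points counted as
cycles of length one (= number of nontrivial cycles + number of fixed points). -/
noncomputable def cNum (π : Equiv.Perm (Fin n)) : ℕ :=
  π.cycleFactorsFinset.card + (n - π.support.card)

/-- `S(σ) = Σ_{i ∈ supp σ} φ*(i, σ i) − max_{i ∈ supp σ} φ*(i, σ i)` for a cycle `σ`. -/
noncomputable def Scost (φ : Fin n → Fin n → ℝ) (σ : Equiv.Perm (Fin n)) : ℝ :=
  (∑ i ∈ σ.support, optCost φ i (σ i)) -
    sSup ((fun i => optCost φ i (σ i)) '' (↑σ.support : Set (Fin n)))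

/-- `S(π) = Σ_t S(σ_t)`, the sum over the nontrivial cycles `σ_t` of `π`. -/
noncomputable def Sperm (φ : Fin n → Fin n → ℝ) (π : Equiv.Perm (Fin n)) : ℝ :=
  ∑ σ ∈ π.cycleFactorsFinset, Scost φ σ

section Aux

variable (φ : Fin n → Fin n → ℝ)

/-- The decomposition-cost set defining `Mcost`. -/
def McostSet (π : Equiv.Perm (Fin n)) : Set ℝ :=
  {c : ℝ | ∃ l : List (Fin n × Fin n), (∀ p ∈ l, p.1 ≠ p.2) ∧
    (l.map fun p => Equiv.swap p.1 p.2).prod = π ∧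
    (l.map fun p => φ p.1 p.2).sum = c}

lemma Mcost_eq (π : Equiv.Perm (Fin n)) : Mcost φ π = sInf (McostSet φ π) := rfl

variable {φ}

lemma cost_sum_nonneg (hnn : ∀ a b : Fin n, a ≠ b → 0 ≤ φ a b)
    (l : List (Fin n × Fin n)) (hl : ∀ p ∈ l, p.1 ≠ p.2) :
    0 ≤ (l.map fun p => φ p.1 p.2).sum := by
  apply List.sum_nonneg
  intro x hx
  obtain ⟨p, hp, rfl⟩ := List.mem_map.mp hx
  exact hnn _ _ (hl p hp)

lemma McostSet_nonneg (hnn : ∀ a b : Fin n, a ≠ b → 0 ≤ φ a b)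
    (π : Equiv.Perm (Fin n)) : ∀ c ∈ McostSet φ π, 0 ≤ c := by
  rintro c ⟨l, hl, -, rfl⟩
  exact cost_sum_nonneg hnn l hl

lemma McostSet_bddBelow (hnn : ∀ a b : Fin n, a ≠ b → 0 ≤ φ a b)
    (π : Equiv.Perm (Fin n)) : BddBelow (McostSet φ π) :=
  ⟨0, fun c hc => McostSet_nonneg hnn π c hc⟩

lemma swaps_to_pairs : ∀ (l : List (Equiv.Perm (Fin n))), (∀ g ∈ l, g.IsSwap) →
    ∃ pl : List (Fin n × Fin n), (∀ p ∈ pl, p.1 ≠ p.2) ∧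
      (pl.map fun p => Equiv.swap p.1 p.2).prod = l.prod := by
  intro l
  induction l with
  | nil => exact fun _ => ⟨[], by simp, by simp⟩
  | cons g t ih =>
    intro h
    obtain ⟨pl, hpl, hprod⟩ := ih fun g hg => h g (List.mem_cons_of_mem _ hg)
    obtain ⟨x, y, hxy, hg⟩ := h g List.mem_cons_self
    refine ⟨(x, y) :: pl, ?_, ?_⟩
    · intro p hp
      rcases List.mem_cons.mp hp with rfl | hp'
      · exact hxy
      · exact hpl p hp'
    · simp only [List.map_cons, List.prod_cons, hprod, hg]

lemma McostSet_nonempty (π : Equiv.Perm (Fin n)) : (McostSet φ π).Nonempty := by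
  obtain ⟨l, hlprod, hlswap⟩ := (Equiv.Perm.truncSwapFactors π).out
  obtain ⟨pl, hpl, hprod⟩ := swaps_to_pairs l hlswap
  exact ⟨_, pl, hpl, by rw [hprod, hlprod], rfl⟩

lemma Mcost_nonneg (hnn : ∀ a b : Fin n, a ≠ b → 0 ≤ φ a b)
    (π : Equiv.Perm (Fin n)) : 0 ≤ Mcost φ π :=
  Real.sInf_nonneg (McostSet_nonneg hnn π)

lemma optCost_self (a : Fin n) : optCost φ a a = 0 := if_pos rfl

lemma optCost_of_ne {a b : Fin n} (hab : a ≠ b) :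
    optCost φ a b = Mcost φ (Equiv.swap a b) := if_neg hab

lemma optCost_nonneg (hnn : ∀ a b : Fin n, a ≠ b → 0 ≤ φ a b)
    (a b : Fin n) : 0 ≤ optCost φ a b := by
  by_cases h : a = b
  · subst h
    rw [optCost_self]
  · rw [optCost_of_ne h]
    exact Mcost_nonneg hnn _

lemma Mcost_le_of_mem (hnn : ∀ a b : Fin n, a ≠ b → 0 ≤ φ a b)
    {π : Equiv.Perm (Fin n)} {c : ℝ} (hc : c ∈ McostSet φ π) : Mcost φ π ≤ c :=
  csInf_le (McostSet_bddBelow hnn π) hc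

lemma optCost_le_phi (hnn : ∀ a b : Fin n, a ≠ b → 0 ≤ φ a b)
    {a b : Fin n} (hab : a ≠ b) : optCost φ a b ≤ φ a b := by
  rw [optCost_of_ne hab]
  exact Mcost_le_of_mem hnn ⟨[(a, b)], by simpa using hab, by simp, by simp⟩

lemma optCost_symm (a b : Fin n) : optCost φ a b = optCost φ b a := by
  unfold optCost
  by_cases h : a = b
  · simp [h]
  · rw [if_neg h, if_neg (Ne.symm h), Equiv.swap_comm]

lemma Mcost_mul_le (hnn : ∀ a b : Fin n, a ≠ b → 0 ≤ φ a b)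
    (σ τ : Equiv.Perm (Fin n)) : Mcost φ (σ * τ) ≤ Mcost φ σ + Mcost φ τ := by
  have key : ∀ c₁ ∈ McostSet φ σ, ∀ c₂ ∈ McostSet φ τ, Mcost φ (σ * τ) ≤ c₁ + c₂ := by
    rintro c₁ ⟨l₁, h₁, hp₁, rfl⟩ c₂ ⟨l₂, h₂, hp₂, rfl⟩
    apply Mcost_le_of_mem hnn
    refine ⟨l₁ ++ l₂, ?_, ?_, ?_⟩
    · intro p hp
      rcases List.mem_append.mp hp with h | h
      · exact h₁ p h
      · exact h₂ p h
    · rw [List.map_append, List.prod_append, hp₁, hp₂]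
    · rw [List.map_append, List.sum_append]
  have h1 : ∀ c₁ ∈ McostSet φ σ, Mcost φ (σ * τ) - c₁ ≤ Mcost φ τ := by
    intro c₁ hc₁
    rw [Mcost_eq φ τ]
    apply le_csInf (McostSet_nonempty τ)
    intro c₂ hc₂
    linarith [key c₁ hc₁ c₂ hc₂]
  have h2 : Mcost φ (σ * τ) - Mcost φ τ ≤ Mcost φ σ := by
    rw [Mcost_eq φ σ]
    apply le_csInf (McostSet_nonempty σ)
    intro c₁ hc₁
    linarith [h1 c₁ hc₁]
  linarith

lemma optCost_tri (hnn : ∀ a b : Fin n, a ≠ b → 0 ≤ φ a b)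
    {a b : Fin n} (x : Fin n) (hab : a ≠ b) :
    optCost φ x b ≤ optCost φ x a + 2 * optCost φ a b := by
  by_cases hxb : x = b
  · subst hxb
    rw [optCost_self]
    have h1 := optCost_nonneg hnn x a
    have h2 := optCost_nonneg hnn a x
    linarith
  by_cases hxa : x = a
  · subst hxa
    rw [optCost_self]
    have h1 := optCost_nonneg (φ := φ) hnn x b
    linarith
  · rw [optCost_of_ne hxb, optCost_of_ne hxa, optCost_of_ne hab]
    have hswap : Equiv.swap x b = Equiv.swap a b * Equiv.swap x a * (Equiv.swap a b)⁻¹ := by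
      have := Equiv.swap_apply_apply (Equiv.swap a b) x a
      rwa [Equiv.swap_apply_of_ne_of_ne hxa hxb, Equiv.swap_apply_left] at this
    rw [hswap, Equiv.swap_inv]
    calc Mcost φ (Equiv.swap a b * Equiv.swap x a * Equiv.swap a b)
        ≤ Mcost φ (Equiv.swap a b * Equiv.swap x a) + Mcost φ (Equiv.swap a b) :=
          Mcost_mul_le hnn _ _
      _ ≤ Mcost φ (Equiv.swap a b) + Mcost φ (Equiv.swap x a) + Mcost φ (Equiv.swap a b) := by
          linarith [Mcost_mul_le hnn (Equiv.swap a b) (Equiv.swap x a)]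
      _ = Mcost φ (Equiv.swap x a) + 2 * Mcost φ (Equiv.swap a b) := by ring

lemma psi_step (hnn : ∀ a b : Fin n, a ≠ b → 0 ≤ φ a b)
    {a b : Fin n} (hab : a ≠ b) (ρ : Equiv.Perm (Fin n)) :
    (∑ i : Fin n, optCost φ i ((Equiv.swap a b * ρ) i)) ≤
      (∑ i : Fin n, optCost φ i (ρ i)) + 4 * optCost φ a b := by
  set i1 := ρ⁻¹ a with hi1
  set i2 := ρ⁻¹ b with hi2
  have hρ1 : ρ i1 = a := by simp [hi1]
  have hρ2 : ρ i2 = b := by simp [hi2]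
  have hne : i1 ≠ i2 := by
    intro h
    rw [h, hρ2] at hρ1
    exact hab hρ1.symm
  have hdiff : (∑ i : Fin n, (optCost φ i ((Equiv.swap a b * ρ) i) - optCost φ i (ρ i)))
      = ∑ i ∈ ({i1, i2} : Finset (Fin n)),
          (optCost φ i ((Equiv.swap a b * ρ) i) - optCost φ i (ρ i)) := by
    symm
    apply Finset.sum_subset (Finset.subset_univ _)
    intro i _ hi
    simp only [Finset.mem_insert, Finset.mem_singleton, not_or] at hi
    have ha' : ρ i ≠ a := fun h => hi.1 (by rw [hi1, ← h, Equiv.Perm.inv_def, Equiv.symm_apply_apply])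
    have hb' : ρ i ≠ b := fun h => hi.2 (by rw [hi2, ← h, Equiv.Perm.inv_def, Equiv.symm_apply_apply])
    rw [Equiv.Perm.mul_apply, Equiv.swap_apply_of_ne_of_ne ha' hb', sub_self]
  have hpair : ∑ i ∈ ({i1, i2} : Finset (Fin n)),
      (optCost φ i ((Equiv.swap a b * ρ) i) - optCost φ i (ρ i))
      = (optCost φ i1 b - optCost φ i1 a) + (optCost φ i2 a - optCost φ i2 b) := by
    rw [Finset.sum_pair hne]
    rw [Equiv.Perm.mul_apply, Equiv.Perm.mul_apply, hρ1, hρ2,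
      Equiv.swap_apply_left, Equiv.swap_apply_right]
  have t1 : optCost φ i1 b ≤ optCost φ i1 a + 2 * optCost φ a b := optCost_tri hnn i1 hab
  have t2 : optCost φ i2 a ≤ optCost φ i2 b + 2 * optCost φ b a := optCost_tri hnn i2 (Ne.symm hab)
  have hs : optCost φ b a = optCost φ a b := optCost_symm b a
  have hsub : (∑ i : Fin n, (optCost φ i ((Equiv.swap a b * ρ) i) - optCost φ i (ρ i)))
      = (∑ i : Fin n, optCost φ i ((Equiv.swap a b * ρ) i)) - ∑ i : Fin n, optCost φ i (ρ i) :=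
    Finset.sum_sub_distrib _ _
  rw [hdiff, hpair] at hsub
  linarith

lemma psi_le_decomp (hnn : ∀ a b : Fin n, a ≠ b → 0 ≤ φ a b) :
    ∀ (l : List (Fin n × Fin n)), (∀ p ∈ l, p.1 ≠ p.2) →
      (∑ i : Fin n, optCost φ i (((l.map fun p => Equiv.swap p.1 p.2).prod) i)) ≤
        4 * (l.map fun p => φ p.1 p.2).sum := by
  intro l
  induction l with
  | nil =>
    intro _
    simp [optCost]
  | cons p t ih =>
    intro h
    have hp : p.1 ≠ p.2 := h p List.mem_cons_self
    have ht := ih fun q hq => h q (List.mem_cons_of_mem _ hq)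
    simp only [List.map_cons, List.prod_cons, List.sum_cons]
    calc (∑ i : Fin n, optCost φ i
          ((Equiv.swap p.1 p.2 * (t.map fun p => Equiv.swap p.1 p.2).prod) i))
        ≤ (∑ i : Fin n, optCost φ i (((t.map fun p => Equiv.swap p.1 p.2).prod) i))
            + 4 * optCost φ p.1 p.2 := psi_step hnn hp _
      _ ≤ 4 * (t.map fun p => φ p.1 p.2).sum + 4 * φ p.1 p.2 := by
          linarith [optCost_le_phi hnn hp]
      _ = 4 * (φ p.1 p.2 + (t.map fun p => φ p.1 p.2).sum) := by ring

lemma Sperm_le_psi (hnn : ∀ a b : Fin n, a ≠ b → 0 ≤ φ a b)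
    (π : Equiv.Perm (Fin n)) :
    Sperm φ π ≤ ∑ i : Fin n, optCost φ i (π i) := by
  have hstep : ∀ σ ∈ π.cycleFactorsFinset,
      Scost φ σ ≤ ∑ i ∈ σ.support, optCost φ i (π i) := by
    intro σ hσ
    obtain ⟨hc, hagree⟩ := Equiv.Perm.mem_cycleFactorsFinset_iff.mp hσ
    obtain ⟨x, hx⟩ := hc.nonempty_support
    have hbdd : BddAbove ((fun i => optCost φ i (σ i)) '' (↑σ.support : Set (Fin n))) :=
      (σ.support.finite_toSet.image _).bddAbove
    have hsup : (0:ℝ) ≤ sSup ((fun i => optCost φ i (σ i)) '' (↑σ.support : Set (Fin n))) := by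
      refine le_trans (optCost_nonneg hnn x (σ x)) (le_csSup hbdd ⟨x, by simpa using hx, rfl⟩)
    have heq : (∑ i ∈ σ.support, optCost φ i (σ i)) = ∑ i ∈ σ.support, optCost φ i (π i) :=
      Finset.sum_congr rfl fun i hi => by rw [hagree i hi]
    rw [Scost, heq]
    linarith
  have hdisj : (↑π.cycleFactorsFinset : Set (Equiv.Perm (Fin n))).PairwiseDisjoint
      (fun σ => σ.support) := fun a ha b hb hab =>
    Equiv.Perm.disjoint_iff_disjoint_support.mp
      (Equiv.Perm.cycleFactorsFinset_pairwise_disjoint π ha hb hab)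
  calc Sperm φ π ≤ ∑ σ ∈ π.cycleFactorsFinset, ∑ i ∈ σ.support, optCost φ i (π i) :=
        Finset.sum_le_sum hstep
    _ = ∑ i ∈ π.cycleFactorsFinset.biUnion (fun σ => σ.support), optCost φ i (π i) :=
        (Finset.sum_biUnion hdisj).symm
    _ ≤ ∑ i : Fin n, optCost φ i (π i) := by
        apply Finset.sum_le_sum_of_subset_of_nonneg (Finset.subset_univ _)
        intro i _ _
        exact optCost_nonneg hnn i (π i)

/-- The key cycle decomposition: a cycle `σ` can be written as a product of the
transpositions `(i, σ i)` for `i` ranging over `supp σ` minus one designated point. -/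
lemma cycle_decomp_aux (ψ : Fin n → Fin n → ℝ) :
    ∀ (k : ℕ) (σ : Equiv.Perm (Fin n)) (y : Fin n), σ.support.card ≤ k → σ.IsCycle →
      y ∈ σ.support →
    ∃ l : List (Fin n × Fin n),
      (∀ p ∈ l, p.1 ∈ σ.support ∧ p.1 ≠ σ⁻¹ y ∧ p.2 = σ p.1) ∧
      (l.map fun p => Equiv.swap p.1 p.2).prod = σ ∧
      l.length = σ.support.card - 1 ∧
      (l.map fun p => ψ p.1 p.2).sum = ∑ i ∈ σ.support.erase (σ⁻¹ y), ψ i (σ i) := by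
  intro k
  induction k with
  | zero =>
    intro σ y hk _ hy
    exfalso
    have : 0 < σ.support.card := Finset.card_pos.mpr ⟨y, hy⟩
    omega
  | succ k ih =>
    intro σ y hk hσ hy
    have hyy : σ y ≠ y := Equiv.Perm.mem_support.mp hy
    by_cases h : σ (σ y) = y
    · -- base case: σ is a single transposition
      have hσswap : σ = Equiv.swap y (σ y) := hσ.eq_swap_of_apply_apply_eq_self hyy h
      have hinv : σ⁻¹ y = σ y := by
        conv_lhs => rw [← h]
        rw [Equiv.Perm.inv_def, Equiv.symm_apply_apply]
      have hsupp : σ.support = {y, σ y} := by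
        conv_lhs => rw [hσswap]
        exact Equiv.Perm.support_swap (Ne.symm hyy)
      have hcard : σ.support.card = 2 := by
        conv_lhs => rw [hσswap]
        exact Equiv.Perm.card_support_swap (Ne.symm hyy)
      have herase : σ.support.erase (σ⁻¹ y) = {y} := by
        rw [hinv, hsupp]
        ext z
        simp only [Finset.mem_erase, Finset.mem_insert, Finset.mem_singleton]
        constructor
        · rintro ⟨hz, rfl | rfl⟩
          · rfl
          · exact absurd rfl hz
        · rintro rfl
          exact ⟨Ne.symm hyy, Or.inl rfl⟩
      refine ⟨[(y, σ y)], ?_, ?_, ?_, ?_⟩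
      · intro p hp
        rcases List.mem_cons.mp hp with rfl | hmem
        · refine ⟨hy, ?_, rfl⟩
          show y ≠ σ⁻¹ y
          rw [hinv]
          exact Ne.symm hyy
        · simp at hmem
      · simp only [List.map_cons, List.map_nil, List.prod_cons, List.prod_nil, mul_one]
        exact hσswap.symm
      · simp [hcard]
      · rw [herase]
        simp
    · -- inductive step
      set τ := Equiv.swap y (σ y) * σ with hτdef
      have hτc : τ.IsCycle := hσ.swap_mul hyy h
      have hτs : τ.support = σ.support \ {y} := Equiv.Perm.support_swap_mul_eq σ y h
      have hσσy : σ (σ y) ≠ σ y := fun hh => hyy (σ.injective hh)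
      have hy' : σ y ∈ τ.support := by
        rw [hτs, Finset.mem_sdiff, Finset.mem_singleton]
        exact ⟨Equiv.Perm.apply_mem_support.mpr hy, hyy⟩
      have hcard : τ.support.card = σ.support.card - 1 := by
        rw [hτs, Finset.sdiff_singleton_eq_erase, Finset.card_erase_of_mem hy]
      have h2le : 2 ≤ σ.support.card := hσ.two_le_card_support
      have hk' : τ.support.card ≤ k := by omega
      obtain ⟨l', hl'mem, hl'prod, hl'len, hl'sum⟩ := ih τ (σ y) hk' hτc hy'
      have hinvy : y ≠ σ⁻¹ y := by
        intro hh
        apply hyy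
        conv_lhs => rw [hh]
        rw [Equiv.Perm.inv_def, Equiv.apply_symm_apply]
      have hinvmem : σ⁻¹ y ∈ σ.support := by
        rw [Equiv.Perm.mem_support, Equiv.Perm.inv_def, Equiv.apply_symm_apply]
        exact hinvy
      have hτinv : τ⁻¹ (σ y) = σ⁻¹ y := by
        rw [eq_comm, Equiv.Perm.eq_inv_iff_eq, hτdef, Equiv.Perm.mul_apply,
          Equiv.Perm.inv_def, Equiv.apply_symm_apply, Equiv.swap_apply_left]
      have hagree : ∀ i : Fin n, i ≠ y → i ≠ σ⁻¹ y → τ i = σ i := by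
        intro i h1 h2
        have ha : σ i ≠ y := fun hh => h2 (by rw [← hh, Equiv.Perm.inv_def, Equiv.symm_apply_apply])
        have hb : σ i ≠ σ y := fun hh => h1 (σ.injective hh)
        rw [hτdef, Equiv.Perm.mul_apply, Equiv.swap_apply_of_ne_of_ne ha hb]
      refine ⟨(y, σ y) :: l', ?_, ?_, ?_, ?_⟩
      · intro p hp
        rcases List.mem_cons.mp hp with rfl | hmem
        · exact ⟨hy, hinvy, rfl⟩
        · obtain ⟨hp1, hp2, hp3⟩ := hl'mem p hmem
          have hp1y : p.1 ≠ y := by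
            rw [hτs, Finset.mem_sdiff, Finset.mem_singleton] at hp1
            exact hp1.2
          have hp1supp : p.1 ∈ σ.support := by
            rw [hτs, Finset.mem_sdiff] at hp1
            exact hp1.1
          rw [hτinv] at hp2
          exact ⟨hp1supp, hp2, by rw [hp3, hagree p.1 hp1y hp2]⟩
      · simp only [List.map_cons, List.prod_cons, hl'prod, hτdef]
        exact Equiv.swap_mul_self_mul y (σ y) σ
      · simp only [List.length_cons, hl'len, hcard]
        omega
      · simp only [List.map_cons, List.sum_cons, hl'sum]
        have hset : τ.support.erase (τ⁻¹ (σ y)) = (σ.support.erase y).erase (σ⁻¹ y) := by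
          rw [hτinv, hτs, Finset.sdiff_singleton_eq_erase, Finset.erase_right_comm]
        have hcongr : (∑ i ∈ τ.support.erase (τ⁻¹ (σ y)), ψ i (τ i))
            = ∑ i ∈ (σ.support.erase y).erase (σ⁻¹ y), ψ i (σ i) := by
          rw [hset]
          apply Finset.sum_congr rfl
          intro i hi
          have hi2 : i ≠ σ⁻¹ y := (Finset.mem_erase.mp hi).1
          have hi1 : i ≠ y := (Finset.mem_erase.mp (Finset.mem_erase.mp hi).2).1
          rw [hagree i hi1 hi2]
        rw [hcongr]
        have hymem : y ∈ σ.support.erase (σ⁻¹ y) := Finset.mem_erase.mpr ⟨hinvy, hy⟩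
        rw [Finset.erase_right_comm]
        exact Finset.add_sum_erase _ (fun i => ψ i (σ i)) hymem

/-- For a cycle `σ`, a decomposition of length `|supp σ| - 1` with `optCost`-cost
exactly `Scost φ σ`. -/
lemma cycle_list (hnn : ∀ a b : Fin n, a ≠ b → 0 ≤ φ a b)
    (σ : Equiv.Perm (Fin n)) (hσ : σ.IsCycle) :
    ∃ l : List (Fin n × Fin n), (∀ p ∈ l, p.1 ≠ p.2) ∧
      (l.map fun p => Equiv.swap p.1 p.2).prod = σ ∧
      l.length = σ.support.card - 1 ∧
      (l.map fun p => optCost φ p.1 p.2).sum = Scost φ σ := by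
  have hne : ((fun i => optCost φ i (σ i)) '' (↑σ.support : Set (Fin n))).Nonempty := by
    obtain ⟨x, hx⟩ := hσ.nonempty_support
    exact ⟨_, ⟨x, by simpa using hx, rfl⟩⟩
  have hfin : ((fun i => optCost φ i (σ i)) '' (↑σ.support : Set (Fin n))).Finite :=
    σ.support.finite_toSet.image _
  obtain ⟨istar, histar, hval⟩ := hne.csSup_mem hfin
  have histar' : istar ∈ σ.support := by simpa using histar
  obtain ⟨l, hmem, hprod, hlen, hsum⟩ := cycle_decomp_aux (optCost φ) σ.support.card σ
    (σ istar) le_rfl hσ (Equiv.Perm.apply_mem_support.mpr histar')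
  have hii : σ⁻¹ (σ istar) = istar := Equiv.symm_apply_apply σ istar
  refine ⟨l, ?_, hprod, hlen, ?_⟩
  · intro p hp
    obtain ⟨h1, _, h3⟩ := hmem p hp
    rw [h3]
    exact (Equiv.Perm.mem_support.mp h1).symm
  · rw [hsum, hii, Scost, ← hval, Finset.sum_erase_eq_sub histar']

/-- Concatenating decompositions for a commuting finset of permutations. -/
lemma assemble (ψ : Fin n → Fin n → ℝ) (Lf : Equiv.Perm (Fin n) → ℕ)
    (Cf : Equiv.Perm (Fin n) → ℝ) (s : Finset (Equiv.Perm (Fin n)))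
    : ∀ (comm : (↑s : Set (Equiv.Perm (Fin n))).Pairwise (Function.onFun Commute id))
    (_ : ∀ σ ∈ s, ∃ l : List (Fin n × Fin n), (∀ p ∈ l, p.1 ≠ p.2) ∧
      (l.map fun p => Equiv.swap p.1 p.2).prod = σ ∧ l.length = Lf σ ∧
      (l.map fun p => ψ p.1 p.2).sum = Cf σ),
    ∃ l : List (Fin n × Fin n), (∀ p ∈ l, p.1 ≠ p.2) ∧
      (l.map fun p => Equiv.swap p.1 p.2).prod = s.noncommProd id comm ∧
      l.length = ∑ σ ∈ s, Lf σ ∧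
      (l.map fun p => ψ p.1 p.2).sum = ∑ σ ∈ s, Cf σ := by
  classical
  induction s using Finset.induction_on with
  | empty =>
    intro comm h
    exact ⟨[], by simp, (Finset.noncommProd_empty _ _).symm, by simp, by simp⟩
  | @insert a t ha iht =>
    intro comm h
    have comm' : (↑t : Set (Equiv.Perm (Fin n))).Pairwise (Function.onFun Commute id) :=
      comm.mono (by simp [Finset.subset_insert])
    obtain ⟨la, hla1, hla2, hla3, hla4⟩ := h a (Finset.mem_insert_self a t)
    obtain ⟨lt, hlt1, hlt2, hlt3, hlt4⟩ := iht comm' fun σ hσ =>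
      h σ (Finset.mem_insert_of_mem hσ)
    refine ⟨la ++ lt, ?_, ?_, ?_, ?_⟩
    · intro p hp
      rcases List.mem_append.mp hp with hp | hp
      · exact hla1 p hp
      · exact hlt1 p hp
    · rw [List.map_append, List.prod_append, hla2, hlt2,
        Finset.noncommProd_insert_of_notMem t a id comm ha]
      rfl
    · rw [List.length_append, hla3, hlt3, Finset.sum_insert ha]
    · rw [List.map_append, List.sum_append, hla4, hlt4, Finset.sum_insert ha]

end Aux

/-- for every permutation `π`, `L(π) ≤ S(π) ≤ 4 M_φ(π)`, where `L(π)` is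
the minimum `φ*`-cost over decompositions of `π` with exactly `n − c(π)` transpositions. -/
theorem stmt15 (φ : Fin n → Fin n → ℝ)
    (hnn : ∀ a b : Fin n, a ≠ b → 0 ≤ φ a b)
    (hsym : ∀ a b : Fin n, φ a b = φ b a)
    (π : Equiv.Perm (Fin n)) :
    Lcost (optCost φ) (n - cNum π) π ≤ Sperm φ π ∧
    Sperm φ π ≤ 4 * Mcost φ π := by
  constructor
  · -- Part 1: Lcost ≤ Sperm
    obtain ⟨l, hl1, hl2, hl3, hl4⟩ := assemble (optCost φ)
      (fun σ => σ.support.card - 1) (Scost φ) π.cycleFactorsFinset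
      (Equiv.Perm.cycleFactorsFinset_mem_commute π)
      (fun σ hσ => cycle_list hnn σ (Equiv.Perm.mem_cycleFactorsFinset_iff.mp hσ).1)
    rw [Equiv.Perm.cycleFactorsFinset_noncommProd] at hl2
    have hsumcard : ∑ σ ∈ π.cycleFactorsFinset, σ.support.card = π.support.card := by
      rw [← Equiv.Perm.sum_cycleType]
      rfl
    have h2le : ∀ σ ∈ π.cycleFactorsFinset, 2 ≤ σ.support.card := fun σ hσ =>
      (Equiv.Perm.mem_cycleFactorsFinset_iff.mp hσ).1.two_le_card_support
    have hlen : l.length = n - cNum π := by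
      rw [hl3]
      have hsub : ∑ σ ∈ π.cycleFactorsFinset, (σ.support.card - 1)
          = (∑ σ ∈ π.cycleFactorsFinset, σ.support.card) - π.cycleFactorsFinset.card := by
        rw [Finset.sum_tsub_distrib _ (fun σ hσ => by have := h2le σ hσ; omega)]
        simp
      have hcle : π.cycleFactorsFinset.card ≤ ∑ σ ∈ π.cycleFactorsFinset, σ.support.card := by
        calc π.cycleFactorsFinset.card = ∑ _σ ∈ π.cycleFactorsFinset, 1 := by simp
          _ ≤ ∑ σ ∈ π.cycleFactorsFinset, σ.support.card :=
            Finset.sum_le_sum fun σ hσ => by have := h2le σ hσ; omega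
      have hsuppn : π.support.card ≤ n := by
        simpa using Finset.card_le_univ π.support
      rw [hsub, hsumcard, cNum]
      omega
    have hmem : Sperm φ π ∈ {c : ℝ | ∃ l : List (Fin n × Fin n), (∀ p ∈ l, p.1 ≠ p.2) ∧
        l.length = n - cNum π ∧
        (l.map fun p => Equiv.swap p.1 p.2).prod = π ∧
        (l.map fun p => optCost φ p.1 p.2).sum = c} :=
      ⟨l, hl1, hlen, hl2, hl4⟩
    have hbdd : BddBelow {c : ℝ | ∃ l : List (Fin n × Fin n), (∀ p ∈ l, p.1 ≠ p.2) ∧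
        l.length = n - cNum π ∧
        (l.map fun p => Equiv.swap p.1 p.2).prod = π ∧
        (l.map fun p => optCost φ p.1 p.2).sum = c} := by
      refine ⟨0, ?_⟩
      rintro c ⟨l', hl', -, -, rfl⟩
      apply List.sum_nonneg
      intro x hx
      obtain ⟨p, hp, rfl⟩ := List.mem_map.mp hx
      exact optCost_nonneg hnn p.1 p.2
    exact csInf_le hbdd hmem
  · -- Part 2: Sperm ≤ 4 * Mcost
    have hkey : ∀ c ∈ McostSet φ π, Sperm φ π ≤ 4 * c := by
      rintro c ⟨l, hl, hprod, rfl⟩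
      calc Sperm φ π ≤ ∑ i : Fin n, optCost φ i (π i) := Sperm_le_psi hnn π
        _ = ∑ i : Fin n, optCost φ i (((l.map fun p => Equiv.swap p.1 p.2).prod) i) := by
            rw [hprod]
        _ ≤ 4 * (l.map fun p => φ p.1 p.2).sum := psi_le_decomp hnn l hl
    have hne := McostSet_nonempty (φ := φ) π
    have hinf : Sperm φ π / 4 ≤ sInf (McostSet φ π) :=
      le_csInf hne fun c hc => by linarith [hkey c hc]
    rw [Mcost_eq]
    linarith
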